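/- In the tree reduced instance, for every W ⊆ V \ {z*_1}: if W contains some vertex of {z*_2, …, z*_{m+1−ℓ}}, then no vertex z with τ(z) = c is reachable from z*_1 in the induced subgraph of G on V \ W (equivalently, H_W ∩ τ⁻¹(c) = ∅). -/
import Mathlib


/-- Vertices of the tree reduced instance: for each `i ∈ [m]`, the path `P^(i)` has
vertices `v i j` (`j : Fin 3`, the vertices `v^(i)_1, v^(i)_2, v^(i)_3`), `u i k`
(`k : Fin (3ℓ)`, the vertices `u^(i)_1, …, u^(i)_{3ℓ}`) and `w i`; the path `P^#` has
vertices `zh 0, zh 1`; the path `P^*` has vertices `zs t` for `t : Fin (m + 1 - ℓ)`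
(all 0-indexed). -/
inductive VT (ℓ m : ℕ) : Type
  | v (i : Fin m) (j : Fin 3) : VT ℓ m
  | u (i : Fin m) (k : Fin (3 * ℓ)) : VT ℓ m
  | w (i : Fin m) : VT ℓ m
  | zh (j : Fin 2) : VT ℓ m
  | zs (t : Fin (m + 1 - ℓ)) : VT ℓ m
  deriving DecidableEq

/-- The candidate set `C = U ∪ {c, d}`, where `U = {1, …, 3ℓ}`. -/
inductive CandT (ℓ : ℕ) : Type
  | elem (k : Fin (3 * ℓ)) : CandT ℓ
  | c : CandT ℓ
  | d : CandT ℓ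
  deriving DecidableEq

/-- Base edge relation of the tree reduced instance: consecutive vertices of each path
`P^(i) = (v^(i)_1, v^(i)_2, v^(i)_3, u^(i)_1, …, u^(i)_{3ℓ}, w^(i))`, of
`P^# = (z#_1, z#_2)` and of `P^* = (z*_1, …, z*_{m+1−ℓ})` are adjacent, and the last
vertex `z*_{m+1−ℓ}` of `P^*` is joined to each head `v^(i)_1` and to `z#_1`. -/
def baseRelT (ℓ m : ℕ) : VT ℓ m → VT ℓ m → Prop
  | .v i j, .v i' j' => i = i' ∧ (j : ℕ) + 1 = (j' : ℕ)
  | .v i j, .u i' k => i = i' ∧ (j : ℕ) = 2 ∧ (k : ℕ) = 0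
  | .u i k, .u i' k' => i = i' ∧ (k : ℕ) + 1 = (k' : ℕ)
  | .u i k, .w i' => i = i' ∧ (k : ℕ) + 1 = 3 * ℓ
  | .zh j, .zh j' => (j : ℕ) + 1 = (j' : ℕ)
  | .zs t, .zs t' => (t : ℕ) + 1 = (t' : ℕ)
  | .zs t, .v _ j => (t : ℕ) + 1 = m + 1 - ℓ ∧ (j : ℕ) = 0
  | .zs t, .zh j => (t : ℕ) + 1 = m + 1 - ℓ ∧ (j : ℕ) = 0
  | _, _ => False

/-- The tree of the tree reduced instance. -/
def GT (ℓ m : ℕ) : SimpleGraph (VT ℓ m) := SimpleGraph.fromRel (baseRelT ℓ m)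

/-- The voting function, given an enumeration `e i 0, e i 1, e i 2` of the elements of
each set `S_i`: `v^(i)_j` votes for `e^(i)_j`, `u^(i)_k` votes for `k`, the `w^(i)` and
`z#`'s vote for `c`, and the `z*`'s vote for `d`. -/
def τT (ℓ m : ℕ) (e : Fin m → Fin 3 → Fin (3 * ℓ)) : VT ℓ m → CandT ℓ
  | .v i j => CandT.elem (e i j)
  | .u _ k => CandT.elem k
  | .w _ => CandT.c
  | .zh _ => CandT.c
  | .zs _ => CandT.d

/-- The set `S_i`, recovered from the enumeration of its elements. -/
def SetT (ℓ m : ℕ) (e : Fin m → Fin 3 → Fin (3 * ℓ)) (i : Fin m) :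
    Finset (Fin (3 * ℓ)) :=
  Finset.image (e i) Finset.univ

/-- The distinguished vertex `x = z*_1`. -/
def xT (ℓ m : ℕ) (h : 0 < m + 1 - ℓ) : VT ℓ m := VT.zs ⟨0, h⟩

/-- `HW G W x`: the set of vertices reachable from `x` in the subgraph of `G` induced on
the complement of `W` (each step of a connecting walk must avoid `W`). -/
def HW {V : Type*} (G : SimpleGraph V) (W : Set V) (x : V) : Set V :=
  {z | Relation.ReflTransGen (fun a b => G.Adj a b ∧ a ∉ W ∧ b ∉ W) x z}

/-- Candidate `c` uniquely wins the election restricted to `W`: every other candidate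
gets strictly fewer votes among the voters of `H_W`. -/
def winsT (ℓ m : ℕ) (e : Fin m → Fin 3 → Fin (3 * ℓ)) (x : VT ℓ m)
    (W : Set (VT ℓ m)) : Prop :=
  ∀ y : CandT ℓ, y ≠ CandT.c →
    (HW (GT ℓ m) W x ∩ τT ℓ m e ⁻¹' {y}).ncard <
      (HW (GT ℓ m) W x ∩ τT ℓ m e ⁻¹' {CandT.c}).ncard

/-- If the deletion set `W` contains one of `z*_2, …, z*_{m+1−ℓ}`, then no voter for
candidate `c` is reachable from `z*_1` in the induced subgraph on the complement of
`W`. -/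
theorem tree_no_c_voter_reachable (ℓ m : ℕ) (hℓ : 1 ≤ ℓ) (hm : ℓ ≤ m)
    (e : Fin m → Fin 3 → Fin (3 * ℓ))
    (hinj : ∀ i, Function.Injective (e i))
    (hcov : Finset.univ.biUnion (SetT ℓ m e) = Finset.univ)
    (htwo : ∀ k : Fin (3 * ℓ),
      (Finset.univ.filter fun i => k ∈ SetT ℓ m e i).card = 2)
    (W : Set (VT ℓ m)) (hW : xT ℓ m (by omega) ∉ W)
    (hhit : ∃ z ∈ W, ∃ t : Fin (m + 1 - ℓ), 1 ≤ (t : ℕ) ∧ z = VT.zs t) :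
    HW (GT ℓ m) W (xT ℓ m (by omega)) ∩ τT ℓ m e ⁻¹' {CandT.c} = ∅ := by
  obtain ⟨z, hzW, t, ht1, rfl⟩ := hhit
  have key : ∀ b, b ∈ HW (GT ℓ m) W (xT ℓ m (by omega)) →
      ∃ t' : Fin (m + 1 - ℓ), b = VT.zs t' ∧ (t' : ℕ) < (t : ℕ) := by
    intro b hb
    induction hb with
    | refl => exact ⟨⟨0, by omega⟩, rfl, by simp only [Fin.val_mk]; omega⟩
    | @tail b c hab hbc ih =>
      obtain ⟨t', rfl, hlt⟩ := ih
      obtain ⟨hadj, hnW1, hnW2⟩ := hbc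
      rw [GT, SimpleGraph.fromRel_adj] at hadj
      have htlt : (t : ℕ) < m + 1 - ℓ := t.isLt
      obtain ⟨hne, hrel | hrel⟩ := hadj
      · cases c with
        | v i j => simp only [baseRelT] at hrel; omega
        | u i k => simp only [baseRelT] at hrel
        | w i => simp only [baseRelT] at hrel
        | zh j => simp only [baseRelT] at hrel; omega
        | zs t'' =>
          simp only [baseRelT] at hrel
          refine ⟨t'', rfl, ?_⟩
          have hne' : (t'' : ℕ) ≠ (t : ℕ) := by
            intro h
            exact hnW2 (by rw [Fin.ext h]; exact hzW)
          omega
      · cases c with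
        | v i j => simp only [baseRelT] at hrel
        | u i k => simp only [baseRelT] at hrel
        | w i => simp only [baseRelT] at hrel
        | zh j => simp only [baseRelT] at hrel
        | zs t'' =>
          simp only [baseRelT] at hrel
          exact ⟨t'', rfl, by omega⟩
  ext a
  simp only [Set.mem_inter_iff, Set.mem_preimage, Set.mem_singleton_iff,
    Set.mem_empty_iff_false, iff_false, not_and]
  intro hreach hτ
  obtain ⟨t', rfl, -⟩ := key a hreach
  simp [τT] at hτ
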